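/- In the setting of the previous problem, if u₁, u₂ ∈ H² ∩ H¹₀ solve ∂²ₓu_i − u_i − N u_i − f(u_i, ∂ₓu_i) = h_i with N > C_f + (C'_f)²/2 + 1/2, then ‖u₁ − u₂‖²_{H¹} ≤ ‖h₁ − h₂‖²_{L²}; in particular the solution operator Υ : h ↦ u is Lipschitz from L² to H¹₀ with constant 1. -/

import Mathlib

open Set Real MeasureTheory

set_option maxHeartbeats 2000000

abbrev Vec (m : ℕ) := EuclideanSpace ℝ (Fin m)

/-- If `u₁, u₂ ∈ H² ∩ H¹₀` solve `∂²ₓuᵢ − uᵢ − Nuᵢ − f(uᵢ, ∂ₓuᵢ) = hᵢ` with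
`N > C_f + (C'_f)²/2 + 1/2` (where `|∂_u f| ≤ C_f` and `|∂_{∂ₓu} f| ≤ C'_f`), then
`‖u₁ − u₂‖²_{H¹} ≤ ‖h₁ − h₂‖²_{L²}`. -/
theorem bvp_solution_operator_lipschitz (m : ℕ) (L Cf Cf' N : ℝ) (hL : 0 < L)
    (f : Vec m → Vec m → Vec m) (hf : ContDiff ℝ 1 (Function.uncurry f))
    (hfu : ∀ y z, ‖fderiv ℝ (fun w => f w z) y‖ ≤ Cf)
    (hfz : ∀ y z, ‖fderiv ℝ (fun w => f y w) z‖ ≤ Cf')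
    (hN : N > Cf + Cf' ^ 2 / 2 + 1 / 2)
    (u₁ u₁' u₁'' u₂ u₂' u₂'' h₁ h₂ : ℝ → Vec m)
    (hu₁ : ∀ x ∈ Icc 0 L, HasDerivAt u₁ (u₁' x) x)
    (hu₁' : ∀ x ∈ Icc 0 L, HasDerivAt u₁' (u₁'' x) x)
    (hu₂ : ∀ x ∈ Icc 0 L, HasDerivAt u₂ (u₂' x) x)
    (hu₂' : ∀ x ∈ Icc 0 L, HasDerivAt u₂' (u₂'' x) x)
    (hbc₁ : u₁ 0 = 0 ∧ u₁ L = 0) (hbc₂ : u₂ 0 = 0 ∧ u₂ L = 0)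
    (heq₁ : ∀ x ∈ Icc 0 L, u₁'' x - u₁ x - N • u₁ x - f (u₁ x) (u₁' x) = h₁ x)
    (heq₂ : ∀ x ∈ Icc 0 L, u₂'' x - u₂ x - N • u₂ x - f (u₂ x) (u₂' x) = h₂ x)
    (hint : IntervalIntegrable (fun x => ‖h₁ x - h₂ x‖ ^ 2) volume 0 L) :
    (∫ x in (0:ℝ)..L, ‖u₁ x - u₂ x‖ ^ 2 + ‖u₁' x - u₂' x‖ ^ 2) ≤
      ∫ x in (0:ℝ)..L, ‖h₁ x - h₂ x‖ ^ 2 := by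
  have hCf : (0:ℝ) ≤ Cf := le_trans (norm_nonneg _) (hfu 0 0)
  have hCf' : (0:ℝ) ≤ Cf' := le_trans (norm_nonneg _) (hfz 0 0)
  set v : ℝ → Vec m := fun x => u₁ x - u₂ x with hv_def
  set v' : ℝ → Vec m := fun x => u₁' x - u₂' x with hv'_def
  set v'' : ℝ → Vec m := fun x => u₁'' x - u₂'' x with hv''_def
  set hb : ℝ → Vec m := fun x => h₁ x - h₂ x with hhb_def
  set fbar : ℝ → Vec m := fun x => f (u₁ x) (u₁' x) - f (u₂ x) (u₂' x) with hfbar_def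
  have hv : ∀ x ∈ Icc 0 L, HasDerivAt v (v' x) x :=
    fun x hx => (hu₁ x hx).sub (hu₂ x hx)
  have hv' : ∀ x ∈ Icc 0 L, HasDerivAt v' (v'' x) x :=
    fun x hx => (hu₁' x hx).sub (hu₂' x hx)
  -- the equation for the difference
  have hbar_eq : ∀ x ∈ Icc 0 L, v'' x = v x + N • v x + fbar x + hb x := by
    intro x hx
    have e1 := heq₁ x hx
    have e2 := heq₂ x hx
    simp only [hv''_def, hv_def, hhb_def, hfbar_def, ← e1, ← e2, smul_sub]
    abel
  -- Lipschitz estimate for f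
  have hdf := hf.differentiable one_ne_zero
  have hflip : ∀ a b c d : Vec m, ‖f a b - f c d‖ ≤ Cf * ‖a - c‖ + Cf' * ‖b - d‖ := by
    intro a b c d
    have h1 : ‖f a b - f c b‖ ≤ Cf * ‖a - c‖ := by
      have hdiff : ∀ y ∈ (univ : Set (Vec m)), DifferentiableAt ℝ (fun w => f w b) y := by
        intro y _
        exact (hdf (y, b)).comp y (differentiableAt_id.prodMk (differentiableAt_const b) : DifferentiableAt ℝ (fun w : Vec m => (w, b)) y)
      exact convex_univ.norm_image_sub_le_of_norm_fderiv_le hdiff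
        (fun y _ => hfu y b) (mem_univ c) (mem_univ a)
    have h2 : ‖f c b - f c d‖ ≤ Cf' * ‖b - d‖ := by
      have hdiff : ∀ z ∈ (univ : Set (Vec m)), DifferentiableAt ℝ (fun w => f c w) z := by
        intro z _
        exact (hdf (c, z)).comp z ((differentiableAt_const c).prodMk differentiableAt_id : DifferentiableAt ℝ (fun w : Vec m => (c, w)) z)
      exact convex_univ.norm_image_sub_le_of_norm_fderiv_le hdiff
        (fun z _ => hfz c z) (mem_univ d) (mem_univ b)
    calc ‖f a b - f c d‖ ≤ ‖f a b - f c b‖ + ‖f c b - f c d‖ := by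
          simpa using norm_sub_le_norm_sub_add_norm_sub (f a b) (f c b) (f c d)
      _ ≤ Cf * ‖a - c‖ + Cf' * ‖b - d‖ := add_le_add h1 h2
  have hfbar_le : ∀ x, ‖fbar x‖ ≤ Cf * ‖v x‖ + Cf' * ‖v' x‖ := fun x => hflip _ _ _ _
  -- continuity
  have hvc : ContinuousOn v (Icc 0 L) :=
    fun x hx => (hv x hx).continuousAt.continuousWithinAt
  have hv'c : ContinuousOn v' (Icc 0 L) :=
    fun x hx => (hv' x hx).continuousAt.continuousWithinAt
  -- the function G and its derivative g
  set G : ℝ → ℝ := fun x => inner ℝ (v' x) (v x) with hG_def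
  set g : ℝ → ℝ := fun x => inner ℝ (v' x) (v' x) + inner ℝ (v'' x) (v x) with hg_def
  have hG : ∀ x ∈ Icc 0 L, HasDerivAt G (g x) x :=
    fun x hx => (hv' x hx).inner ℝ (hv x hx)
  -- pointwise lower bound for g
  have key : ∀ x ∈ Icc 0 L,
      (‖v x‖ ^ 2 + ‖v' x‖ ^ 2 - ‖hb x‖ ^ 2) / 2 ≤ g x := by
    intro x hx
    have hiv : (inner ℝ (v x) (v x) : ℝ) = ‖v x‖ ^ 2 := real_inner_self_eq_norm_sq _
    have hiv' : (inner ℝ (v' x) (v' x) : ℝ) = ‖v' x‖ ^ 2 := real_inner_self_eq_norm_sq _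
    have hexp : g x = ‖v' x‖ ^ 2 + (‖v x‖ ^ 2 + N * ‖v x‖ ^ 2
        + inner ℝ (fbar x) (v x) + inner ℝ (hb x) (v x)) := by
      rw [hg_def]
      simp only [hbar_eq x hx, inner_add_left, real_inner_smul_left, hiv, hiv']
    have hP : -(‖fbar x‖ * ‖v x‖) ≤ (inner ℝ (fbar x) (v x) : ℝ) :=
      neg_le_of_abs_le (abs_real_inner_le_norm _ _)
    have hQ : -(‖hb x‖ * ‖v x‖) ≤ (inner ℝ (hb x) (v x) : ℝ) :=
      neg_le_of_abs_le (abs_real_inner_le_norm _ _)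
    have hfb := hfbar_le x
    have ha : (0:ℝ) ≤ ‖v x‖ := norm_nonneg _
    have hbn : (0:ℝ) ≤ ‖v' x‖ := norm_nonneg _
    have hcn : (0:ℝ) ≤ ‖hb x‖ := norm_nonneg _
    rw [hexp]
    nlinarith [mul_le_mul_of_nonneg_right hfb ha, sq_nonneg (Cf' * ‖v x‖ - ‖v' x‖),
      sq_nonneg (‖hb x‖ - ‖v x‖), sq_nonneg (‖v x‖),
      mul_nonneg (by linarith : (0:ℝ) ≤ N - Cf - Cf' ^ 2 / 2 - 1 / 2) (sq_nonneg (‖v x‖))]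
  -- integrability of g
  have hIoc : Set.uIoc (0:ℝ) L = Ioc 0 L := uIoc_of_le hL.le
  have hgmeas : AEStronglyMeasurable g (volume.restrict (Set.uIoc (0:ℝ) L)) := by
    rw [hIoc]
    refine ((stronglyMeasurable_deriv G).aestronglyMeasurable.restrict).congr ?_
    refine ((ae_restrict_iff' measurableSet_Ioc).2 (Filter.Eventually.of_forall ?_))
    intro x hx
    exact ((hG x (Ioc_subset_Icc_self hx)).deriv)
  -- a continuous part of g and its bound
  set base : ℝ → ℝ := fun x => inner ℝ (v' x) (v' x) + (inner ℝ (v x) (v x)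
      + N * inner ℝ (v x) (v x) + inner ℝ (fbar x) (v x)) with hbase_def
  have hfbarc : ContinuousOn fbar (Icc 0 L) := by
    have h1 : ContinuousOn u₁ (Icc 0 L) := fun x hx => (hu₁ x hx).continuousAt.continuousWithinAt
    have h2 : ContinuousOn u₁' (Icc 0 L) := fun x hx => (hu₁' x hx).continuousAt.continuousWithinAt
    have h3 : ContinuousOn u₂ (Icc 0 L) := fun x hx => (hu₂ x hx).continuousAt.continuousWithinAt
    have h4 : ContinuousOn u₂' (Icc 0 L) := fun x hx => (hu₂' x hx).continuousAt.continuousWithinAt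
    have hfc : Continuous (Function.uncurry f) := hf.continuous
    exact ((hfc.comp_continuousOn (h1.prodMk h2))).sub (hfc.comp_continuousOn (h3.prodMk h4))
  have hbasec : ContinuousOn base (Icc 0 L) := by
    apply ContinuousOn.add (hv'c.inner hv'c)
    exact ((hvc.inner hvc).add (continuousOn_const.mul (hvc.inner hvc))).add (hfbarc.inner hvc)
  obtain ⟨K, hK⟩ := (isCompact_Icc).exists_bound_of_continuousOn hbasec
  obtain ⟨M, hM⟩ := (isCompact_Icc).exists_bound_of_continuousOn hvc
  have hM0 : 0 ≤ M := le_trans (norm_nonneg _) (hM 0 (by constructor <;> [rfl; exact hL.le]))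
  have hgbound : ∀ x ∈ Icc 0 L, ‖g x‖ ≤ (K + M / 2) + (M / 2) * ‖hb x‖ ^ 2 := by
    intro x hx
    have hsplit : g x = base x + inner ℝ (hb x) (v x) := by
      rw [hg_def, hbase_def]
      simp only [hbar_eq x hx, inner_add_left, real_inner_smul_left]
      ring
    have h1 : ‖g x‖ ≤ ‖base x‖ + ‖(inner ℝ (hb x) (v x) : ℝ)‖ := by
      rw [hsplit]; exact norm_add_le _ _
    have h2 : ‖(inner ℝ (hb x) (v x) : ℝ)‖ ≤ ‖hb x‖ * ‖v x‖ := by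
      rw [Real.norm_eq_abs]; exact abs_real_inner_le_norm _ _
    have h3 : ‖hb x‖ * ‖v x‖ ≤ M * ((1 + ‖hb x‖ ^ 2) / 2) := by
      have hvM : ‖v x‖ ≤ M := hM x hx
      have hc : ‖hb x‖ ≤ (1 + ‖hb x‖ ^ 2) / 2 := by nlinarith [sq_nonneg (‖hb x‖ - 1)]
      calc ‖hb x‖ * ‖v x‖ ≤ ‖hb x‖ * M :=
            mul_le_mul_of_nonneg_left hvM (norm_nonneg _)
        _ = M * ‖hb x‖ := mul_comm _ _
        _ ≤ M * ((1 + ‖hb x‖ ^ 2) / 2) := mul_le_mul_of_nonneg_left hc hM0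
    have h4 := hK x hx
    calc ‖g x‖ ≤ ‖base x‖ + ‖(inner ℝ (hb x) (v x) : ℝ)‖ := h1
      _ ≤ K + M * ((1 + ‖hb x‖ ^ 2) / 2) := add_le_add h4 (h2.trans h3)
      _ = (K + M / 2) + (M / 2) * ‖hb x‖ ^ 2 := by ring
  have hdomint : IntervalIntegrable (fun x => (K + M / 2) + (M / 2) * ‖hb x‖ ^ 2)
      volume 0 L := intervalIntegrable_const.add (hint.const_mul (M / 2))
  have hgint : IntervalIntegrable g volume 0 L := by
    refine hdomint.mono_fun' hgmeas ?_
    rw [hIoc]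
    refine (ae_restrict_iff' measurableSet_Ioc).2 (Filter.Eventually.of_forall ?_)
    intro x hx
    exact hgbound x (Ioc_subset_Icc_self hx)
  -- integral of g is zero
  have hGint : (∫ x in (0:ℝ)..L, g x) = 0 := by
    have := intervalIntegral.integral_eq_sub_of_hasDerivAt
      (f := G) (f' := g) (a := 0) (b := L) ?_ hgint
    · rw [this]
      have hv0 : v 0 = 0 := by simp [hv_def, hbc₁.1, hbc₂.1]
      have hvL : v L = 0 := by simp [hv_def, hbc₁.2, hbc₂.2]
      simp [hG_def, hv0, hvL]
    · intro x hx
      exact hG x (by rwa [uIcc_of_le hL.le] at hx)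
  -- integrability of φ
  have hφint : IntervalIntegrable (fun x => ‖v x‖ ^ 2 + ‖v' x‖ ^ 2) volume 0 L := by
    apply ContinuousOn.intervalIntegrable
    rw [uIcc_of_le hL.le]
    exact ((hvc.norm.pow 2).add (hv'c.norm.pow 2))
  -- compare integrals
  have hpint : IntervalIntegrable (fun x => (‖v x‖ ^ 2 + ‖v' x‖ ^ 2 - ‖hb x‖ ^ 2) / 2)
      volume 0 L := (hφint.sub hint).div_const 2
  have hmono : (∫ x in (0:ℝ)..L, (‖v x‖ ^ 2 + ‖v' x‖ ^ 2 - ‖hb x‖ ^ 2) / 2) ≤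
      ∫ x in (0:ℝ)..L, g x :=
    intervalIntegral.integral_mono_on hL.le hpint hgint key
  have hsplit : (∫ x in (0:ℝ)..L, (‖v x‖ ^ 2 + ‖v' x‖ ^ 2 - ‖hb x‖ ^ 2) / 2) =
      ((∫ x in (0:ℝ)..L, ‖v x‖ ^ 2 + ‖v' x‖ ^ 2) - ∫ x in (0:ℝ)..L, ‖hb x‖ ^ 2) / 2 := by
    rw [intervalIntegral.integral_div, intervalIntegral.integral_sub hφint hint]
  rw [hsplit, hGint] at hmono
  linarith
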